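/- Let $A$ be a Noetherian integral domain and $S$ a multiplicative subset of $A \setminus \{0\}$ such that $A$ is integrally closed in $S^{-1}A$. Then $A = S^{-1}A \cap \bigcap_{\mathfrak{P}} A_{\mathfrak{P}}$, where the intersection (inside the fraction field of $A$) is taken over all prime ideals $\mathfrak{P}$ of $A$ of height one such that $\mathfrak{P} \cap S \neq \emptyset$. -/

import Mathlib

/-- The "denominator ideal" of an element `y` of a field `K` over a subring `A`. -/
def den (A K : Type*) [CommRing A] [Field K] [Algebra A K] (y : K) : Ideal A where
  carrier := {t | ∃ a : A, algebraMap A K t * y = algebraMap A K a}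
  add_mem' := by
    rintro a b ⟨c, hc⟩ ⟨d, hd⟩
    exact ⟨c + d, by rw [map_add, map_add, add_mul, hc, hd]⟩
  zero_mem' := ⟨0, by simp⟩
  smul_mem' := by
    rintro c t ⟨a, ha⟩
    exact ⟨c * a, by rw [smul_eq_mul, map_mul, map_mul, mul_assoc, ha]⟩

lemma mem_den {A K : Type*} [CommRing A] [Field K] [Algebra A K] {y : K} {t : A} :
    t ∈ den A K y ↔ ∃ a : A, algebraMap A K t * y = algebraMap A K a := Iff.rfl

/-- Let `A` be a Noetherian integral domain and `S` a multiplicative subset of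
`A \ {0}` such that `A` is integrally closed in `S⁻¹A`.  Then, inside the fraction field `K` of
`A`, one has `A = S⁻¹A ∩ ⋂ A_𝔓`, where the intersection is over all primes `𝔓` of height one
with `𝔓 ∩ S ≠ ∅`.  Membership of `x ∈ K` in `S⁻¹A` (resp. `A_𝔓`) is expressed by saying that
`s·x ∈ A` for some `s ∈ S` (resp. `t·x ∈ A` for some `t ∉ 𝔓`). -/
theorem stmt_2 {A : Type*} [CommRing A] [IsDomain A] [IsNoetherianRing A]
    (S : Submonoid A) (hS0 : (0 : A) ∉ S)
    (hIC : IsIntegrallyClosedIn A (Localization S))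
    (K : Type*) [Field K] [Algebra A K] [IsFractionRing A K]
    (x : K)
    (hxS : ∃ a : A, ∃ s ∈ S, algebraMap A K s * x = algebraMap A K a)
    (hxP : ∀ (P : Ideal A) (hP : P.IsPrime),
      Order.height (⟨P, hP⟩ : PrimeSpectrum A) = 1 → (∃ s ∈ S, s ∈ P) →
      ∃ a : A, ∃ t : A, t ∉ P ∧ algebraMap A K t * x = algebraMap A K a) :
    ∃ a : A, algebraMap A K a = x := by
  by_contra hx
  push_neg at hx
  have hinj : Function.Injective (algebraMap A K) := IsFractionRing.injective A K
  obtain ⟨a₀, s₀, hs₀S, hs₀⟩ := hxS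
  -- the family of denominator ideals
  set F : Set (Ideal A) :=
    {I | ∃ y : K, (∃ s ∈ S, s ∈ den A K y) ∧ (∀ b : A, algebraMap A K b ≠ y) ∧
        den A K x ≤ den A K y ∧ I = den A K y} with hF
  have hFne : F.Nonempty := ⟨den A K x, x, ⟨s₀, hs₀S, a₀, hs₀⟩, hx, le_rfl, rfl⟩
  obtain ⟨P₀, hPF, hPmax⟩ :=
    set_has_maximal_iff_noetherian.mpr (inferInstance : IsNoetherian A A) F hFne
  obtain ⟨y, ⟨s, hsS, hsden⟩, hyA, hxy, rfl⟩ := hPF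
  set P := den A K y with hPdef
  have hmax : ∀ y' : K, (∃ s' ∈ S, s' ∈ den A K y') → (∀ b : A, algebraMap A K b ≠ y') →
      den A K x ≤ den A K y' → P ≤ den A K y' → den A K y' = P := by
    intro y' h1 h2 h3 h4
    by_contra hne
    exact hPmax (den A K y') ⟨y', h1, h2, h3, rfl⟩ (lt_of_le_of_ne h4 fun h => hne h.symm)
  -- `P` is prime
  have hPprime : P.IsPrime := by
    constructor
    · intro htop
      have h1 : (1 : A) ∈ P := htop ▸ Submodule.mem_top
      obtain ⟨a, ha⟩ := h1
      rw [map_one, one_mul] at ha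
      exact hyA a ha.symm
    · intro a b hab
      by_cases haP : a ∈ P
      · exact Or.inl haP
      right
      obtain ⟨c, hc⟩ := hsden
      set y' : K := algebraMap A K a * y with hy'
      have h1 : s ∈ den A K y' := by
        refine ⟨a * c, ?_⟩
        rw [hy', mul_left_comm, hc, ← map_mul, mul_comm a c]
      have h2 : ∀ b' : A, algebraMap A K b' ≠ y' := by
        intro b' hb'
        exact haP ⟨b', hb'.symm⟩
      have h3 : P ≤ den A K y' := by
        rintro t ⟨d, hd⟩
        exact ⟨a * d, by rw [hy', mul_left_comm, hd, ← map_mul, mul_comm a d]⟩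
      have heq := hmax y' ⟨s, hsS, h1⟩ h2 (le_trans hxy h3) h3
      obtain ⟨d, hd⟩ := hab
      have hb : b ∈ den A K y' := by
        refine ⟨d, ?_⟩
        rw [hy', ← mul_assoc, ← map_mul, mul_comm b a, hd]
      rw [← heq]
      exact hb
  have hsP : s ∈ P := hsden
  have hs0' : s ≠ 0 := fun h => hS0 (h ▸ hsS)
  have hPbot : P ≠ ⊥ := fun h => hs0' (by rwa [h, Ideal.mem_bot] at hsP)
  by_cases hstab : ∀ p ∈ P, ∀ c : A, algebraMap A K p * y = algebraMap A K c → c ∈ P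
  · -- then `y` is integral over `A`, contradicting integral closedness in `S⁻¹A`
    set N : Submodule A K := Submodule.map (Algebra.linearMap A K) P with hN
    have hNne : N ≠ ⊥ := by
      intro h
      have hsN : algebraMap A K s ∈ N := ⟨s, hsP, rfl⟩
      rw [h, Submodule.mem_bot] at hsN
      exact hs0' (hinj (by rwa [map_zero]))
    have hNfg : N.FG := (IsNoetherian.noetherian (P : Submodule A A)).map _
    have hyint : IsIntegral A y := by
      apply isIntegral_of_smul_mem_submodule N hNne hNfg y
      rintro n ⟨p, hp, rfl⟩
      obtain ⟨c, hc⟩ := mem_den.mp hp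
      refine ⟨c, hstab p hp c hc, ?_⟩
      simp only [Algebra.linearMap_apply]
      rw [smul_eq_mul, mul_comm, hc]
    -- transfer to the localization
    have hunits : ∀ t : S, IsUnit (algebraMap A K t) := by
      intro t
      refine isUnit_iff_ne_zero.mpr fun h => ?_
      have : (t : A) = 0 := hinj (by rwa [map_zero])
      exact hS0 (this ▸ t.2)
    set g : Localization S →+* K := IsLocalization.lift hunits with hg
    have hgcomp : ∀ a : A, g (algebraMap A (Localization S) a) = algebraMap A K a := fun a =>
      IsLocalization.lift_eq hunits a
    have hginj : Function.Injective g := by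
      rw [injective_iff_map_eq_zero]
      intro z hz
      obtain ⟨⟨a, t⟩, ht⟩ := IsLocalization.surj S z
      have ha0 : algebraMap A K a = 0 := by
        rw [← hgcomp, ← ht, map_mul, hz, zero_mul]
      have ha : a = 0 := hinj (by rwa [map_zero])
      rw [ha, map_zero] at ht
      exact ((IsLocalization.map_units (Localization S) t).mul_left_eq_zero).mp ht
    obtain ⟨c, hc⟩ := hsden
    set z : Localization S := IsLocalization.mk' (Localization S) c (⟨s, hsS⟩ : S) with hz
    have hgz : g z = y := by
      have hspec := IsLocalization.mk'_spec (Localization S) c (⟨s, hsS⟩ : S)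
      have hs0K : algebraMap A K s ≠ 0 := fun h => hs0' (hinj (by rwa [map_zero]))
      have h2 : algebraMap A K s * g z = algebraMap A K s * y :=
        calc algebraMap A K s * g z = g (algebraMap A (Localization S) s * z) := by
              rw [map_mul, hgcomp]
          _ = g (algebraMap A (Localization S) c) := by rw [mul_comm, hspec]
          _ = algebraMap A K c := hgcomp c
          _ = algebraMap A K s * y := hc.symm
      exact mul_left_cancel₀ hs0K h2
    set gAlg : Localization S →ₐ[A] K := { toRingHom := g, commutes' := hgcomp } with hgAlg
    have hzint : IsIntegral A z := by
      have : IsIntegral A (gAlg z) := by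
        show IsIntegral A (g z)
        rw [hgz]; exact hyint
      exact (isIntegral_algHom_iff gAlg hginj).mp this
    haveI := hIC
    obtain ⟨a, ha⟩ := (IsIntegralClosure.isIntegral_iff (A := A) (R := A) (B := Localization S)).mp hzint
    refine hyA a ?_
    rw [← hgz, ← ha, hgcomp]
  · -- otherwise the maximal ideal of `A_P` is principal, so `P` has height one
    push_neg at hstab
    obtain ⟨p, hpP, u, hpu, huP⟩ := hstab
    have key : ∀ m ∈ P, ∃ d : A, u * m = p * d := by
      intro m hm
      obtain ⟨d, hd⟩ := hm
      refine ⟨d, hinj ?_⟩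
      rw [map_mul, map_mul, ← hpu, ← hd]; ring
    haveI := hPprime
    set B := Localization.AtPrime P with hB
    have hcple : (P.primeCompl : Submonoid A) ≤ nonZeroDivisors A := fun t ht =>
      mem_nonZeroDivisors_of_ne_zero fun h0 => ht (h0 ▸ P.zero_mem)
    haveI : IsDomain B := IsLocalization.isDomain_localization hcple
    haveI : IsNoetherianRing B :=
      IsLocalization.isNoetherianRing P.primeCompl B inferInstance
    have hmaxeq : IsLocalRing.maximalIdeal B = Ideal.map (algebraMap A B) P :=
      (Localization.AtPrime.map_eq_maximalIdeal).symm
    have hprin : (IsLocalRing.maximalIdeal B).IsPrincipal := by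
      refine ⟨⟨algebraMap A B p, ?_⟩⟩
      rw [hmaxeq, Ideal.submodule_span_eq]
      apply le_antisymm
      · rw [Ideal.map_le_iff_le_comap]
        intro m hm
        obtain ⟨d, hd⟩ := key m hm
        have hu : IsUnit (algebraMap A B u) :=
          IsLocalization.map_units B (⟨u, huP⟩ : P.primeCompl)
        rw [Ideal.mem_comap, Ideal.mem_span_singleton']
        refine ⟨hu.unit⁻¹ * algebraMap A B d, ?_⟩
        have h1 : algebraMap A B u * algebraMap A B m = algebraMap A B p * algebraMap A B d := by
          rw [← map_mul, ← map_mul, hd]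
        calc (↑hu.unit⁻¹ * algebraMap A B d) * algebraMap A B p
            = ↑hu.unit⁻¹ * (algebraMap A B p * algebraMap A B d) := by ring
          _ = ↑hu.unit⁻¹ * (algebraMap A B u * algebraMap A B m) := by rw [h1]
          _ = (↑hu.unit⁻¹ * ↑hu.unit) * algebraMap A B m := by
              rw [IsUnit.unit_spec]; ring
          _ = algebraMap A B m := by rw [hu.unit.inv_mul, one_mul]
      · rw [Ideal.span_le]
        rintro _ rfl
        exact Ideal.mem_map_of_mem _ hpP
    obtain ⟨-, huniq⟩ :=
      ((tfae_of_isNoetherianRing_of_isLocalRing_of_isDomain B).out 4 3).mp hprin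
    have hP1 : ∀ Q : Ideal A, Q.IsPrime → Q < P → Q = ⊥ := by
      intro Q hQ hQP
      by_contra hQbot
      have hdisj : Disjoint (P.primeCompl : Set A) (Q : Set A) :=
        Set.disjoint_left.mpr fun t ht htQ => ht (hQP.le htQ)
      have hdisjP : Disjoint (P.primeCompl : Set A) (P : Set A) :=
        Set.disjoint_left.mpr fun t ht htP => ht htP
      haveI hQ' : (Ideal.map (algebraMap A B) Q).IsPrime :=
        IsLocalization.isPrime_of_isPrime_disjoint P.primeCompl B Q hQ hdisj
      have hQ'bot : Ideal.map (algebraMap A B) Q ≠ ⊥ := by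
        obtain ⟨q, hqQ, hq0⟩ := (Submodule.ne_bot_iff Q).mp hQbot
        intro h
        have hmem : algebraMap A B q ∈ (⊥ : Ideal B) := h ▸ Ideal.mem_map_of_mem _ hqQ
        rw [Ideal.mem_bot] at hmem
        exact hq0 (IsLocalization.injective B hcple (hmem.trans (map_zero _).symm))
      have heq := huniq _ hQ'bot hQ'
      have h1 : Ideal.comap (algebraMap A B) (Ideal.map (algebraMap A B) Q) = Q :=
        IsLocalization.comap_map_of_isPrime_disjoint P.primeCompl B hQ hdisj
      have h2 : Ideal.comap (algebraMap A B) (Ideal.map (algebraMap A B) P) = P :=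
        IsLocalization.comap_map_of_isPrime_disjoint P.primeCompl B hPprime hdisjP
      have : Q = P := by rw [← h1, heq, hmaxeq, h2]
      exact hQP.ne this
    -- hence `P` has height one
    have hheight : Order.height (⟨P, hPprime⟩ : PrimeSpectrum A) = 1 := by
      have hle : Order.height (⟨P, hPprime⟩ : PrimeSpectrum A) ≤ (1 : ℕ) := by
        refine Order.height_le_coe_iff.mpr ?_
        intro q hq
        have hqbot : q.asIdeal = ⊥ := hP1 q.asIdeal q.isPrime hq
        have hqmin : IsMin q := by
          intro r hr
          have : r.asIdeal ≤ (⊥ : Ideal A) := hqbot ▸ hr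
          show q.asIdeal ≤ r.asIdeal
          rw [hqbot]
          exact bot_le
        rw [Order.height_eq_zero.mpr hqmin]
        norm_num
      have hbotpt : Order.height (⟨⊥, Ideal.bot_prime⟩ : PrimeSpectrum A) = 0 :=
        Order.height_eq_zero.mpr fun r _ => (bot_le : (⊥ : Ideal A) ≤ r.asIdeal)
      have hlt : (⟨⊥, Ideal.bot_prime⟩ : PrimeSpectrum A) < ⟨P, hPprime⟩ :=
        lt_of_le_of_ne bot_le (fun h => hPbot (congrArg PrimeSpectrum.asIdeal h).symm)
      have hge : (0 : ℕ∞) < Order.height (⟨P, hPprime⟩ : PrimeSpectrum A) := by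
        rw [← hbotpt]
        exact Order.height_strictMono hlt (by simp [hbotpt])
      refine le_antisymm (by exact_mod_cast hle) (ENat.one_le_iff_ne_zero.mpr hge.ne')
    obtain ⟨a, t, htP, ht⟩ := hxP P hPprime hheight ⟨s, hsS, hsP⟩
    exact htP (hxy ⟨a, ht⟩)
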